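/- Let F be a field, n and m positive integers, R an F-subalgebra of U_n^*(F) whose Jacobson radical J = J(R) satisfies Jᵐ = 0, and V a faithful right R-module that is finite dimensional over F. Then dim_F R ≤ M(m, dim_F V). -/

import Mathlib

lemma prodStrictUpper {F : Type*} [Field F] {n : ℕ}
    (l : List (Matrix (Fin n) (Fin n) F))
    (h : ∀ A ∈ l, ∀ i j : Fin n, (j : ℕ) ≤ (i : ℕ) → A i j = 0) :
    ∀ i j : Fin n, (j : ℕ) < (i : ℕ) + l.length → l.prod i j = 0 := by
  induction l with
  | nil =>
    intro i j hij
    simp only [List.length_nil, Nat.add_zero] at hij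
    simp only [List.prod_nil]
    exact Matrix.one_apply_ne (fun hf => absurd (Fin.val_eq_of_eq hf) (by omega))
  | cons A t ih =>
    intro i j hij
    rw [List.prod_cons, Matrix.mul_apply]
    refine Finset.sum_eq_zero fun r _ => ?_
    rcases le_or_gt (r : ℕ) (i : ℕ) with hri | hri
    · rw [h A List.mem_cons_self i r hri, zero_mul]
    · rw [ih (fun B hB => h B (List.mem_cons_of_mem _ hB)) r j
        (by simp only [List.length_cons] at hij ⊢; omega), mul_zero]

lemma powStrictUpper {F : Type*} [Field F] {n : ℕ}
    (A : Matrix (Fin n) (Fin n) F)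
    (h : ∀ i j : Fin n, (j : ℕ) ≤ (i : ℕ) → A i j = 0) : A ^ n = 0 := by
  have := prodStrictUpper (List.replicate n A) (by
    intro B hB; rw [List.eq_of_mem_replicate hB]; exact h)
  rw [List.prod_replicate, List.length_replicate] at this
  ext i j
  exact this i j (by omega)

/-- The set of values `(n² − Σ kᵢ²)/2 + 1` over tuples of nonnegative
integers summing to `n`; `M(ℓ,n)` is its greatest element. -/
def MSet (ℓ n : ℕ) : Set ℤ :=
  {d | ∃ k : Fin ℓ → ℕ, (∑ i, k i) = n ∧
    2 * (d - 1) = (n : ℤ) ^ 2 - ∑ i, ((k i : ℤ)) ^ 2}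

/-- The set of upper triangular `n × n` matrices with constant main diagonal. -/
def UStarSet (F : Type*) [Field F] (n : ℕ) : Set (Matrix (Fin n) (Fin n) F) :=
  {A | (∀ i j : Fin n, j < i → A i j = 0) ∧ ∀ i j : Fin n, A i i = A j j}

set_option maxHeartbeats 2000000 in
set_option synthInstance.maxHeartbeats 800000 in
theorem stmt11 (F : Type*) [Field F] (n m : ℕ) (hn : 0 < n) (hm : 0 < m)
    (R : Subalgebra F (Matrix (Fin n) (Fin n) F))
    (hR : (R : Set (Matrix (Fin n) (Fin n) F)) ⊆ UStarSet F n)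
    (hJ : ∀ l : List ↥R, l.length = m →
      (∀ x ∈ l, x ∈ (⊥ : Ideal ↥R).jacobson) → l.prod = 0)
    (V : Type*) [AddCommGroup V] [Module F V] [Module (↥R)ᵐᵒᵖ V]
    (hcompat : ∀ (c : F) (v : V),
      (MulOpposite.op (algebraMap F ↥R c)) • v = c • v)
    (hfaith : ∀ r : ↥R, (∀ v : V, MulOpposite.op r • v = 0) → r = 0)
    [FiniteDimensional F V] (M : ℤ)
    (hM : IsGreatest (MSet m (Module.finrank F V)) M) :
    (Module.finrank F ↥R : ℤ) ≤ M := by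
  classical
  set d := Module.finrank F V with hd
  set z : Fin n := ⟨0, hn⟩ with hz
  -- basic facts about elements of R
  have hUp : ∀ r : ↥R, ∀ i j : Fin n, j < i → (r : Matrix (Fin n) (Fin n) F) i j = 0 :=
    fun r => (hR r.2).1
  have hDiag : ∀ r : ↥R, ∀ i j : Fin n,
      (r : Matrix (Fin n) (Fin n) F) i i = (r : Matrix (Fin n) (Fin n) F) j j :=
    fun r => (hR r.2).2
  -- the diagonal functional
  have δsmul : ∀ (c : F) (r : ↥R),
      ((c • r : ↥R) : Matrix (Fin n) (Fin n) F) z z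
        = c * ((r : Matrix (Fin n) (Fin n) F) z z) := by
    intro c r; rfl
  let δL : ↥R →ₗ[F] F :=
    { toFun := fun r => (r : Matrix (Fin n) (Fin n) F) z z
      map_add' := fun r s => rfl
      map_smul' := fun c r => rfl }
  have δzlt : ∀ k : Fin n, k ≠ z → z < k := by
    intro k hk
    have h1 : (k : ℕ) ≠ 0 := fun h => hk (Fin.ext h)
    have h2 : (z : ℕ) = 0 := rfl
    exact Fin.lt_def.mpr (by omega)
  have δmul : ∀ r s : ↥R, δL (r * s) = δL r * δL s := by
    intro r s
    show ((r * s : ↥R) : Matrix (Fin n) (Fin n) F) z z = _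
    rw [Subalgebra.coe_mul, Matrix.mul_apply]
    refine Finset.sum_eq_single z (fun k _ hk => ?_) (by simp)
    rw [hUp s k z (δzlt k hk), mul_zero]
  have δone : δL 1 = 1 := by
    show ((1 : ↥R) : Matrix (Fin n) (Fin n) F) z z = 1
    rw [Subalgebra.coe_one]
    exact Matrix.one_apply_eq z
  set N : Submodule F ↥R := LinearMap.ker δL with hN
  -- strictly upper entries for elements of N
  have hNup : ∀ r : ↥R, r ∈ N → ∀ i j : Fin n, (j : ℕ) ≤ (i : ℕ) →
      (r : Matrix (Fin n) (Fin n) F) i j = 0 := by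
    intro r hr i j hij
    rcases eq_or_lt_of_le hij with h | h
    · have hji : j = i := Fin.ext h
      subst hji
      have := hDiag r j z
      have hr0 : (r : Matrix (Fin n) (Fin n) F) z z = 0 := hr
      rw [this, hr0]
    · exact hUp r i j (Fin.lt_def.mpr h)
  -- N is closed under multiplication on both sides
  have hNmul : ∀ r : ↥R, r ∈ N → ∀ s : ↥R, s * r ∈ N ∧ r * s ∈ N := by
    intro r hr s
    have hr0 : δL r = 0 := hr
    constructor
    · show δL (s * r) = 0
      rw [δmul, hr0, mul_zero]
    · show δL (r * s) = 0
      rw [δmul, hr0, zero_mul]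
  -- nilpotency of elements of N
  have hNnil : ∀ r : ↥R, r ∈ N → r ^ n = 0 := by
    intro r hr
    have := powStrictUpper (r : Matrix (Fin n) (Fin n) F) (hNup r hr)
    have hcoe : ((r ^ n : ↥R) : Matrix (Fin n) (Fin n) F) = 0 := by
      rw [← this]; norm_cast
    exact Subtype.ext hcoe
  -- N is contained in the Jacobson radical
  have hNjac : ∀ r : ↥R, r ∈ N → r ∈ (⊥ : Ideal ↥R).jacobson := by
    intro r hr
    rw [Ideal.mem_jacobson_iff]
    intro y
    have hyx : y * r ∈ N := (hNmul r hr y).1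
    have : IsUnit (y * r + 1) :=
      IsNilpotent.isUnit_add_one ⟨n, hNnil _ hyx⟩
    obtain ⟨u, hu⟩ := this
    refine ⟨(↑u⁻¹ : ↥R), ?_⟩
    have h1 : (↑u⁻¹ : ↥R) * (y * r + 1) = 1 := by rw [← hu]; exact u.inv_mul
    rw [Ideal.mem_bot]
    have h2 : (↑u⁻¹ : ↥R) * y * r + ↑u⁻¹ - 1 = ↑u⁻¹ * (y * r + 1) - 1 := by
      rw [mul_add, mul_one, mul_assoc]
    rw [h2, h1, sub_self]
  -- products of m elements of N vanish
  have hNprod : ∀ l : List ↥R, l.length = m → (∀ x ∈ l, x ∈ N) → l.prod = 0 := by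
    intro l hl hmem
    exact hJ l hl (fun x hx => hNjac x (hmem x hx))
  -- the action as F-linear endomorphisms
  have key : ∀ (c : F) (r : ↥R) (v : V),
      MulOpposite.op r • (c • v) = c • (MulOpposite.op r • v) := by
    intro c r v
    rw [← hcompat c v, ← mul_smul, ← MulOpposite.op_mul, Algebra.commutes c r,
      MulOpposite.op_mul, mul_smul, hcompat]
  let φ : ↥R →ₗ[F] (V →ₗ[F] V) :=
    { toFun := fun r =>
        { toFun := fun v => MulOpposite.op r • v
          map_add' := fun v w => smul_add _ v w
          map_smul' := fun c v => key c r v }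
      map_add' := fun r s => by
        ext v
        show MulOpposite.op (r + s) • v = _
        rw [MulOpposite.op_add, add_smul]; rfl
      map_smul' := fun c r => by
        ext v
        show MulOpposite.op (c • r) • v = c • (MulOpposite.op r • v)
        rw [Algebra.smul_def, MulOpposite.op_mul, mul_smul, hcompat, key] }
  have φmul : ∀ (r s : ↥R) (v : V), φ (r * s) v = φ s (φ r v) := by
    intro r s v
    show MulOpposite.op (r * s) • v = MulOpposite.op s • (MulOpposite.op r • v)
    rw [MulOpposite.op_mul, mul_smul]
  have φone : ∀ v : V, φ 1 v = v := by
    intro v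
    show MulOpposite.op (1 : ↥R) • v = v
    rw [MulOpposite.op_one, one_smul]
  -- the filtration
  obtain ⟨W, hW0, hWs⟩ : ∃ W : ℕ → Submodule F V, W 0 = ⊤ ∧
      ∀ i, W (i + 1) = ⨆ r : ↥N, Submodule.map (φ (r : ↥R)) (W i) :=
    ⟨fun i => Nat.rec ⊤ (fun _ p => ⨆ r : ↥N, Submodule.map (φ (r : ↥R)) p) i,
      rfl, fun i => rfl⟩
  have hWmap : ∀ (r : ↥R), r ∈ N → ∀ i, ∀ v ∈ W i, φ r v ∈ W (i + 1) := by
    intro r hr i v hv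
    rw [hWs]
    exact le_iSup (fun s : ↥N => Submodule.map (φ (s : ↥R)) (W i)) ⟨r, hr⟩
      (Submodule.mem_map_of_mem hv)
  have hWanti : ∀ i, W (i + 1) ≤ W i := by
    intro i
    induction i with
    | zero => rw [hW0]; exact le_top
    | succ i ih =>
      rw [hWs (i+1)]
      refine iSup_le fun r => ?_
      refine le_trans (Submodule.map_mono ih) ?_
      rw [hWs i]
      exact le_iSup (fun s : ↥N => Submodule.map (φ (s : ↥R)) (W i)) r
  have hWm : W m = ⊥ := by
    -- W i is contained in the span of i-fold products applied to V
    have claim : ∀ i, W i ≤ Submodule.span F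
        {x : V | ∃ (l : List ↥R) (w : V), l.length = i ∧ (∀ r ∈ l, r ∈ N) ∧
          φ l.prod w = x} := by
      intro i
      induction i with
      | zero =>
        intro v _
        exact Submodule.subset_span ⟨[], v, rfl, by simp, by simp [φone]⟩
      | succ i ih =>
        rw [hWs]
        refine iSup_le fun r => ?_
        calc Submodule.map (φ (r : ↥R)) (W i)
            ≤ Submodule.map (φ (r : ↥R)) (Submodule.span F _) := Submodule.map_mono ih
          _ = Submodule.span F (φ (r : ↥R) '' _) := Submodule.map_span _ _
          _ ≤ _ := by
              refine Submodule.span_mono ?_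
              rintro x ⟨y, ⟨l, w, hl, hmem, rfl⟩, rfl⟩
              refine ⟨l ++ [(r : ↥R)], w, by simp [hl], ?_, ?_⟩
              · intro s hs
                rcases List.mem_append.mp hs with h | h
                · exact hmem s h
                · rw [List.mem_singleton.mp h]; exact r.2
              · rw [List.prod_append, List.prod_singleton, φmul]
    refine le_bot_iff.mp ((claim m).trans ?_)
    refine Submodule.span_le.mpr ?_
    rintro x ⟨l, w, hl, hmem, rfl⟩
    rw [hNprod l hl hmem]
    simp
  -- instance
  haveI : FiniteDimensional F ↥R := inferInstance
  -- choose complements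
  have hcomp : ∀ i : ℕ, ∃ U : Submodule F V, U ≤ W i ∧ U ⊔ W (i+1) = W i ∧
      Module.finrank F ↥(W i) = Module.finrank F ↥U + Module.finrank F ↥(W (i+1)) := by
    intro i
    obtain ⟨q, hq⟩ := Submodule.exists_isCompl (Submodule.comap (W i).subtype (W (i+1)))
    refine ⟨q.map (W i).subtype, Submodule.map_subtype_le _ _, ?_, ?_⟩
    · have hmp : (Submodule.comap (W i).subtype (W (i+1))).map (W i).subtype = W (i+1) := by
        rw [Submodule.map_comap_subtype, inf_eq_right.mpr (hWanti i)]
      rw [← hmp, ← Submodule.map_sup, hq.symm.sup_eq_top, Submodule.map_top,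
        Submodule.range_subtype]
    · have e1 : Module.finrank F ↥(Submodule.comap (W i).subtype (W (i+1)))
          = Module.finrank F ↥(W (i+1)) :=
        (Submodule.comapSubtypeEquivOfLe (hWanti i)).finrank_eq
      have e2 : Module.finrank F ↥(q.map (W i).subtype) = Module.finrank F ↥q :=
        ((W i).equivSubtypeMap q).symm.finrank_eq
      have e3 := Submodule.finrank_add_eq_of_isCompl hq
      omega
  choose U hUle hUsup hUrank using hcomp
  set k : ℕ → ℕ := fun i => Module.finrank F ↥(U i) with hk
  set w : ℕ → ℕ := fun i => Module.finrank F ↥(W i) with hw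
  have hw0 : w 0 = d := by
    show Module.finrank F ↥(W 0) = d
    rw [hW0, hd]
    exact finrank_top F V
  have hwm : w m = 0 := by
    show Module.finrank F ↥(W m) = 0
    rw [hWm]
    exact finrank_bot F V
  have hrec : ∀ i, w i = k i + w (i+1) := hUrank
  -- the U's span V
  have hTop : (⨆ i : Fin m, U (i : ℕ)) = ⊤ := by
    have main : ∀ t j, m = j + t → W j ≤ ⨆ i : Fin m, U (i : ℕ) := by
      intro t
      induction t with
      | zero =>
        intro j hj
        have hjm : j = m := by omega
        rw [hjm, hWm]
        exact bot_le
      | succ t ih =>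
        intro j hj
        have hjm : j < m := by omega
        rw [← hUsup j]
        exact sup_le (le_iSup (fun i : Fin m => U (i : ℕ)) ⟨j, hjm⟩) (ih (j+1) (by omega))
    rw [← top_le_iff, ← hW0]
    exact main m 0 (by omega)
  -- the injection
  have hφW : ∀ (r : ↥N) (i : Fin m) (u : ↥(U (i:ℕ))), φ (r : ↥R) ↑u ∈ W ((i:ℕ)+1) :=
    fun r i u => hWmap _ r.2 _ _ (hUle _ u.2)
  let Φ : ↥N →ₗ[F] (∀ i : Fin m, (↥(U (i:ℕ)) →ₗ[F] ↥(W ((i:ℕ)+1)))) :=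
    { toFun := fun r i => LinearMap.codRestrict _ ((φ (r : ↥R)).comp (U (i:ℕ)).subtype)
        (fun u => hφW r i u)
      map_add' := fun r s => by
        funext i
        apply LinearMap.ext; intro u
        apply Subtype.ext
        simp [LinearMap.codRestrict_apply]; rfl
      map_smul' := fun c r => by
        funext i
        apply LinearMap.ext; intro u
        apply Subtype.ext
        simp [LinearMap.codRestrict_apply]; rfl }
  have hΦinj : Function.Injective Φ := by
    rw [injective_iff_map_eq_zero]
    intro r h0
    have hker : ∀ i : Fin m, U (i:ℕ) ≤ LinearMap.ker (φ (r : ↥R)) := by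
      intro i x hx
      have h1 := congrArg (fun f => ((f i) ⟨x, hx⟩ : ↥(W ((i:ℕ)+1)))) h0
      have h2 : φ (r : ↥R) x = 0 := congrArg Subtype.val h1
      exact LinearMap.mem_ker.mpr h2
    have hKtop : (⊤ : Submodule F V) ≤ LinearMap.ker (φ (r : ↥R)) := by
      rw [← hTop]
      exact iSup_le hker
    have hall : ∀ v : V, MulOpposite.op (r : ↥R) • v = 0 := by
      intro v
      exact LinearMap.mem_ker.mp (hKtop Submodule.mem_top)
    exact Subtype.ext (hfaith _ hall)
  -- dimension bound for N
  have hNle : Module.finrank F ↥N ≤ ∑ i : Fin m, k (i:ℕ) * w ((i:ℕ)+1) := by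
    have h1 := LinearMap.finrank_le_finrank_of_injective hΦinj
    rw [Module.finrank_pi_fintype] at h1
    refine h1.trans_eq (Finset.sum_congr rfl fun i _ => ?_)
    rw [Module.finrank_linearMap F F ↥(U (i:ℕ)) ↥(W ((i:ℕ)+1))]
  -- finrank R = finrank N + 1
  have hRrank : Module.finrank F ↥R = Module.finrank F ↥N + 1 := by
    have hsurj : LinearMap.range δL = ⊤ := by
      rw [← top_le_iff]
      intro a _
      exact ⟨a • 1, by rw [map_smul, δone, smul_eq_mul, mul_one]⟩
    have h1 := LinearMap.finrank_range_add_finrank_ker δL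
    rw [hsurj, finrank_top, Module.finrank_self] at h1
    rw [← hN] at h1
    omega
  -- arithmetic
  have ekw : ∀ i, (k i : ℤ) = (w i : ℤ) - (w (i+1) : ℤ) := by
    intro i
    have h := hrec i
    rw [h]
    push_cast
    ring
  have hsum1 : ∑ i : Fin m, (k (i:ℕ) : ℤ) = (d : ℤ) := by
    rw [Fin.sum_univ_eq_sum_range (fun i => (k i : ℤ))]
    calc ∑ i ∈ Finset.range m, (k i : ℤ)
        = ∑ i ∈ Finset.range m, ((w i : ℤ) - (w (i+1) : ℤ)) :=
          Finset.sum_congr rfl (fun i _ => ekw i)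
      _ = (w 0 : ℤ) - (w m : ℤ) := Finset.sum_range_sub' (fun i => (w i : ℤ)) m
      _ = (d : ℤ) := by rw [hw0, hwm]; simp
  have key2 : (∑ i : Fin m, (k (i:ℕ) : ℤ)^2)
      + 2 * (∑ i : Fin m, (k (i:ℕ) : ℤ) * (w ((i:ℕ)+1) : ℤ)) = (d : ℤ)^2 := by
    rw [Finset.mul_sum, ← Finset.sum_add_distrib]
    rw [Fin.sum_univ_eq_sum_range
      (fun i => ((k i : ℤ)^2 + 2 * ((k i : ℤ) * (w (i+1) : ℤ))))]
    calc ∑ i ∈ Finset.range m, ((k i : ℤ)^2 + 2 * ((k i : ℤ) * (w (i+1) : ℤ)))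
        = ∑ i ∈ Finset.range m, ((w i : ℤ)^2 - (w (i+1) : ℤ)^2) := by
          refine Finset.sum_congr rfl (fun i _ => ?_)
          rw [ekw i]
          ring
      _ = (w 0 : ℤ)^2 - (w m : ℤ)^2 := Finset.sum_range_sub' (fun i => (w i : ℤ)^2) m
      _ = (d : ℤ)^2 := by rw [hw0, hwm]; simp
  have hsum2 : 2 * ∑ i : Fin m, (k (i:ℕ) : ℤ) * (w ((i:ℕ)+1) : ℤ)
      = (d : ℤ)^2 - ∑ i : Fin m, (k (i:ℕ) : ℤ)^2 := by linarith [key2]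
  -- conclusion
  set S : ℕ := ∑ i : Fin m, k (i:ℕ) * w ((i:ℕ)+1) with hS
  have hScast : (S : ℤ) = ∑ i : Fin m, (k (i:ℕ) : ℤ) * (w ((i:ℕ)+1) : ℤ) := by
    push_cast [hS]
    rfl
  have hmem : ((S : ℤ) + 1) ∈ MSet m d := by
    refine ⟨fun i => k (i:ℕ), ?_, ?_⟩
    · have : ((∑ i : Fin m, k (i:ℕ) : ℕ) : ℤ) = (d : ℤ) := by
        push_cast
        exact hsum1
      exact_mod_cast this
    · rw [add_sub_cancel_right, hScast, hsum2]
  have hle : (Module.finrank F ↥R : ℤ) ≤ (S : ℤ) + 1 := by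
    rw [hRrank]
    push_cast
    have : (Module.finrank F ↥N : ℤ) ≤ (S : ℤ) := by exact_mod_cast hNle
    omega
  exact hle.trans (hM.2 hmem)
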